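/- Let $A$ be a Noetherian integral domain and $S$ a multiplicative subset of $A \setminus \{0\}$ such that $A$ is integrally closed in $S^{-1}A$. Then for any prime ideal $\mathfrak{P}$ of $A$ with $\mathfrak{P} \cap S \neq \emptyset$, one has $\mathrm{depth}(A_{\mathfrak{P}}) \geq \min\{\mathrm{height}(\mathfrak{P}), 2\}$. -/

import Mathlib

/-- The depth of a local ring: the supremum of the lengths of regular sequences contained in
the maximal ideal. -/
noncomputable def localRingDepth (R : Type*) [CommRing R] [IsLocalRing R] : ℕ∞ :=
  sSup {n : ℕ∞ | ∃ rs : List R, (∀ x ∈ rs, x ∈ IsLocalRing.maximalIdeal R) ∧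
    RingTheory.Sequence.IsRegular R rs ∧ n = rs.length}

open RingTheory.Sequence Pointwise

section Aux

variable {A : Type*} [CommRing A] [IsDomain A] [IsNoetherianRing A]

lemma aux_smul_top_eq_span {R : Type*} [CommRing R] (r : R) :
    r • (⊤ : Submodule R R) = Ideal.span {r} := by
  rw [← Submodule.singleton_set_smul, Submodule.set_smul_top_eq_span]

lemma aux_finite_minimalPrimes (I : Ideal A) : I.minimalPrimes.Finite := by
  rw [Ideal.minimalPrimes_eq_comap]
  exact (minimalPrimes.finite_of_isNoetherianRing (A ⧸ I)).image _

/-- Key lemma: if `Q = (sA : t₀)` is prime with `s ∈ S`, and `A` is integrally closed in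
`S⁻¹A`, then every prime strictly below `Q` is `⊥`. -/
lemma aux_key {S : Submonoid A} (hS0 : (0 : A) ∉ S)
    (hIC : IsIntegrallyClosedIn A (Localization S))
    {s t₀ : A} (hsS : s ∈ S)
    (hQp : ((Ideal.span {s}).colon (Ideal.span {t₀})).IsPrime) :
    ∀ r : Ideal A, r.IsPrime → r < (Ideal.span {s}).colon (Ideal.span {t₀}) → r = ⊥ := by
  intro r hr hlt
  set Q : Ideal A := (Ideal.span {s}).colon (Ideal.span {t₀}) with hQdef
  have hmem : ∀ y : A, y ∈ Q ↔ ∃ c, y * t₀ = s * c := by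
    intro y
    rw [hQdef, Ideal.mem_colon_span_singleton, Ideal.mem_span_singleton]
    exact Iff.rfl
  have hs0 : s ≠ 0 := fun h => hS0 (h ▸ hsS)
  have hsQ : s ∈ Q := (hmem s).mpr ⟨t₀, rfl⟩
  have ht₀ : ∀ c, t₀ ≠ s * c := by
    intro c hc
    exact hQp.ne_top (Ideal.eq_top_iff_one _ |>.mpr ((hmem 1).mpr ⟨c, by rw [one_mul, hc]⟩))
  set L := Localization S with hLdef
  have hSle : S ≤ nonZeroDivisors A := fun x hx =>
    mem_nonZeroDivisors_of_ne_zero (fun h => hS0 (h ▸ hx))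
  haveI : IsDomain L := IsLocalization.isDomain_localization hSle
  have hinj : Function.Injective (algebraMap A L) := IsLocalization.injective L hSle
  have hsL : algebraMap A L s ≠ 0 := fun h => hs0 (hinj (h.trans (map_zero _).symm))
  set x : L := IsLocalization.mk' L t₀ ⟨s, hsS⟩ with hxdef
  have hsx : x * algebraMap A L s = algebraMap A L t₀ := IsLocalization.mk'_spec L t₀ ⟨s, hsS⟩
  by_cases hcase : ∀ q ∈ Q, ∀ c, q * t₀ = s * c → c ∈ Q
  · -- Case 1: x is integral over A, hence in A, contradiction.
    exfalso
    set N : Submodule A L := Submodule.map (Algebra.linearMap A L) (Q : Submodule A A) with hNdef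
    have hNfg : N.FG := (IsNoetherian.noetherian (Q : Submodule A A)).map _
    have hNne : N ≠ ⊥ := by
      rw [Submodule.ne_bot_iff]
      exact ⟨algebraMap A L s, Submodule.mem_map_of_mem hsQ, hsL⟩
    have hstab : ∀ n ∈ N, x • n ∈ N := by
      rintro n hn
      obtain ⟨q, hq, rfl⟩ := Submodule.mem_map.mp hn
      obtain ⟨c, hc⟩ := (hmem q).mp hq
      have hcQ := hcase q hq c hc
      have hxq : x • (Algebra.linearMap A L q) = Algebra.linearMap A L c := by
        rw [smul_eq_mul]
        apply mul_left_cancel₀ hsL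
        have h4 : algebraMap A L s * (x * Algebra.linearMap A L q)
            = (x * algebraMap A L s) * algebraMap A L q := by
          simp only [Algebra.linearMap_apply]; ring
        rw [h4, hsx]
        simp only [Algebra.linearMap_apply, ← map_mul]
        rw [mul_comm t₀ q, hc]
      rw [hxq]
      exact Submodule.mem_map_of_mem hcQ
    have hint : IsIntegral A x := isIntegral_of_smul_mem_submodule N hNne hNfg x hstab
    haveI := hIC
    obtain ⟨y, hy⟩ := IsIntegralClosure.isIntegral_iff (R := A) (A := A) (B := L) |>.mp hint
    have h5 : algebraMap A L t₀ = algebraMap A L (s * y) := by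
      rw [← hsx, ← hy, map_mul, mul_comm]
    exact ht₀ y (hinj h5)
  · -- Case 2: maximal ideal of A_Q is principal; apply DVR theory.
    push_neg at hcase
    obtain ⟨p, hpQ, c, hpc, hcQ⟩ := hcase
    haveI hQp' : Q.IsPrime := hQp
    set B := Localization.AtPrime Q with hBdef
    haveI : IsNoetherianRing B :=
      IsLocalization.isNoetherianRing Q.primeCompl B ‹IsNoetherianRing A›
    set φ := algebraMap A B with hφdef
    have hprin : IsLocalRing.maximalIdeal B = Ideal.span {φ p} := by
      rw [← Localization.AtPrime.map_eq_maximalIdeal]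
      apply le_antisymm
      · rw [Ideal.map_le_iff_le_comap]
        intro q hq
        obtain ⟨cq, hcq⟩ := (hmem q).mp hq
        have hqc : q * c = p * cq := by
          apply mul_left_cancel₀ hs0
          calc s * (q * c) = q * (s * c) := by ring
            _ = q * (p * t₀) := by rw [← hpc]
            _ = p * (q * t₀) := by ring
            _ = p * (s * cq) := by rw [hcq]
            _ = s * (p * cq) := by ring
        have hu : IsUnit (φ c) := IsLocalization.map_units B (⟨c, hcQ⟩ : Q.primeCompl)
        have heq : φ q * φ c = φ p * φ cq := by rw [← map_mul, ← map_mul, hqc]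
        show φ q ∈ Ideal.span {φ p}
        rw [Ideal.mem_span_singleton]
        exact hu.dvd_mul_right.mp ⟨φ cq, heq⟩
      · rw [Ideal.span_le, Set.singleton_subset_iff]
        exact Ideal.mem_map_of_mem φ hpQ
    have htfae := (tfae_of_isNoetherianRing_of_isLocalRing_of_isDomain B).out 4 3
    obtain ⟨-, hmaxprime⟩ := htfae.mp ⟨⟨φ p, hprin⟩⟩
    by_contra hr0
    have hdisj : Disjoint (Q.primeCompl : Set A) (r : Set A) := by
      rw [Set.disjoint_left]
      intro a ha har
      exact ha (hlt.le har)
    have hr' : (r.map φ).IsPrime :=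
      IsLocalization.isPrime_of_isPrime_disjoint Q.primeCompl B r hr hdisj
    have hrne : r.map φ ≠ ⊥ := by
      obtain ⟨y, hy, hy0⟩ := Submodule.exists_mem_ne_zero_of_ne_bot hr0
      have hφy : φ y ≠ 0 := fun h => hy0
        (IsLocalization.injective B Q.primeCompl_le_nonZeroDivisors (h.trans (map_zero φ).symm))
      exact fun h => hφy ((Submodule.eq_bot_iff _).mp h _ (Ideal.mem_map_of_mem φ hy))
    have heqmax := hmaxprime (r.map φ) hrne hr'
    have h1 : Ideal.comap φ (r.map φ) = r :=
      IsLocalization.comap_map_of_isPrime_disjoint Q.primeCompl B hr hdisj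
    have h2 : Ideal.comap φ (IsLocalRing.maximalIdeal B) = Q :=
      Localization.AtPrime.comap_maximalIdeal
    rw [heqmax, h2] at h1
    exact (ne_of_lt hlt) h1.symm

end Aux

/-- Let `A` be a Noetherian integral domain and `S` a multiplicative subset of
`A \ {0}` such that `A` is integrally closed in `S⁻¹A`.  Then for any prime ideal `𝔓` of `A`
with `𝔓 ∩ S ≠ ∅`, one has `depth (A_𝔓) ≥ min (height 𝔓, 2)`. -/
theorem stmt_1 {A : Type*} [CommRing A] [IsDomain A] [IsNoetherianRing A]
    (S : Submonoid A) (hS0 : (0 : A) ∉ S)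
    (hIC : IsIntegrallyClosedIn A (Localization S))
    (P : Ideal A) [hP : P.IsPrime]
    (hPS : ∃ s ∈ S, s ∈ P) :
    min (Order.height (⟨P, hP⟩ : PrimeSpectrum A)) 2 ≤
      localRingDepth (Localization.AtPrime P) := by
  classical
  obtain ⟨s, hsS, hsP⟩ := hPS
  have hs0 : s ≠ 0 := fun h => hS0 (h ▸ hsS)
  set B := Localization.AtPrime P with hBdef
  haveI : IsNoetherianRing B := IsLocalization.isNoetherianRing P.primeCompl B ‹IsNoetherianRing A›
  set f := algebraMap A B with hfdef
  have hinj : Function.Injective f := IsLocalization.injective B P.primeCompl_le_nonZeroDivisors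
  have hmax : IsLocalRing.maximalIdeal B = P.map f :=
    Localization.AtPrime.map_eq_maximalIdeal.symm
  have hmem_max : ∀ y ∈ P, f y ∈ IsLocalRing.maximalIdeal B := fun y hy =>
    hmax ▸ Ideal.mem_map_of_mem f hy
  have hs' : f s ≠ 0 := fun h => hs0 (hinj (h.trans (map_zero f).symm))
  have hregs : IsSMulRegular B (f s) := fun u v h =>
    mul_left_cancel₀ hs' (by simpa [smul_eq_mul] using h)
  have hnt : ∀ rs : List B, (∀ y ∈ rs, y ∈ IsLocalRing.maximalIdeal B) →
      (⊤ : Submodule B B) ≠ Ideal.ofList rs • ⊤ := by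
    intro rs h hEq
    have hle : Ideal.ofList rs ≤ IsLocalRing.maximalIdeal B :=
      Ideal.span_le.mpr (fun y hy => h y hy)
    have hsm : Ideal.ofList rs • (⊤ : Submodule B B) ≤
        (IsLocalRing.maximalIdeal B : Submodule B B) :=
      Submodule.smul_le.mpr fun c hc n _ => by
        simpa [smul_eq_mul] using Ideal.mul_mem_right n _ (hle hc)
    have h1 : (1 : B) ∈ Ideal.ofList rs • (⊤ : Submodule B B) := by
      rw [← hEq]; trivial
    exact (IsLocalRing.maximalIdeal.isMaximal B).ne_top
      ((Ideal.eq_top_iff_one _).mpr (hsm h1))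
  have hdepth : ∀ rs : List B, (∀ x ∈ rs, x ∈ IsLocalRing.maximalIdeal B) →
      RingTheory.Sequence.IsRegular B rs →
      ((rs.length : ℕ) : ℕ∞) ≤ localRingDepth B := fun rs h1 h2 =>
    le_sSup ⟨rs, h1, h2, rfl⟩
  rcases le_or_gt (Order.height (⟨P, hP⟩ : PrimeSpectrum A)) 1 with hh | hh
  · -- height ≤ 1 : it suffices that depth ≥ 1
    refine le_trans (le_trans (min_le_left _ _) hh) ?_
    have hreg1 : RingTheory.Sequence.IsRegular B [f s] := by
      rw [isRegular_iff]
      refine ⟨(isWeaklyRegular_cons_iff _ _ _).mpr ⟨hregs, IsWeaklyRegular.nil _ _⟩, ?_⟩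
      exact hnt [f s] (by simpa using hmem_max s hsP)
    simpa using hdepth [f s] (by simpa using hmem_max s hsP) hreg1
  · -- height ≥ 2
    have h2h : ((2 : ℕ) : ℕ∞) ≤ Order.height (⟨P, hP⟩ : PrimeSpectrum A) := by
      have h := Order.add_one_le_of_lt hh
      rw [show ((2 : ℕ) : ℕ∞) = 1 + 1 by norm_num]
      exact h
    obtain ⟨pc, hlast, hlen⟩ :=
      Order.exists_series_of_le_height (⟨P, hP⟩ : PrimeSpectrum A) h2h
    set i0 : Fin (pc.length + 1) := ⟨0, by omega⟩ with hi0
    set i1 : Fin (pc.length + 1) := ⟨1, by omega⟩ with hi1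
    have hi1lt : i1 < Fin.last pc.length := by
      rw [Fin.lt_def]; simp [hi1, hlen]
    have hi0lt : i0 < i1 := by rw [Fin.lt_def]; simp [hi0, hi1]
    set r1 : Ideal A := (pc i1).asIdeal with hr1def
    have hr1prime : r1.IsPrime := (pc i1).isPrime
    have hr1P : r1 < P := by
      have hmono := pc.strictMono hi1lt
      rw [RelSeries.last] at hlast
      rw [hlast] at hmono
      exact (PrimeSpectrum.asIdeal_lt_asIdeal _ _).mpr hmono
    have hr1ne : r1 ≠ ⊥ := by
      have hmono := pc.strictMono hi0lt
      have hlt0 : (pc.toFun i0).asIdeal < r1 :=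
        (PrimeSpectrum.asIdeal_lt_asIdeal _ _).mpr hmono
      intro h
      rw [h] at hlt0
      exact (not_le_of_gt hlt0) bot_le
    set F : Set (Ideal A) := {Q | Q ∈ (Ideal.span {s}).minimalPrimes ∧ Q < P} with hFdef
    have hFfin : F.Finite := (aux_finite_minimalPrimes _).subset (fun Q hQ => hQ.1)
    have hsmem : ∀ z : B, z ∈ (f s) • (⊤ : Submodule B B) ↔ f s ∣ z := by
      intro z
      rw [aux_smul_top_eq_span, Ideal.mem_span_singleton]
    have hAss : ∀ Q ∈ associatedPrimes B (QuotSMulTop (f s) B), (Q.comap f) ∈ F := by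
      intro Q hQass'
      obtain ⟨hQprime, tbar, hQann⟩ := isAssociatedPrime_iff.mp hQass'
      haveI := hQprime
      set Q0 := Q.comap f with hQ0def
      haveI hQ0p : Q0.IsPrime := Ideal.IsPrime.comap f
      obtain ⟨t, rfl⟩ := Submodule.Quotient.mk_surjective _ tbar
      obtain ⟨⟨a, u⟩, rfl⟩ := IsLocalization.mk'_surjective (M := P.primeCompl) t
      have ha : ∀ y : A, y ∈ Q0 ↔ f s ∣ f y * f a := by
        intro y
        have h1 : y ∈ Q0 ↔ f y •
            (Submodule.Quotient.mk (IsLocalization.mk' B a u) : QuotSMulTop (f s) B) = 0 := by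
          simp only [hQ0def, Ideal.mem_comap, hQann, Submodule.mem_colon_singleton, Submodule.mem_bot]
        have h2 : (f y • (Submodule.Quotient.mk (IsLocalization.mk' B a u) :
            QuotSMulTop (f s) B) = 0) ↔ f s ∣ f y * IsLocalization.mk' B a u := by
          rw [← Submodule.Quotient.mk_smul, Submodule.Quotient.mk_eq_zero, hsmem, smul_eq_mul]
        have h3 : f y * f a = (f y * IsLocalization.mk' B a u) * f u := by
          rw [mul_assoc, IsLocalization.mk'_spec]
        rw [h1, h2, h3, (IsLocalization.map_units B u).dvd_mul_right]
      have hQ0P : Q0 ≤ P := by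
        have hQle : Q ≤ IsLocalRing.maximalIdeal B := IsLocalRing.le_maximalIdeal hQprime.ne_top
        intro y hy
        have hym : f y ∈ IsLocalRing.maximalIdeal B := hQle hy
        rwa [← Localization.AtPrime.comap_maximalIdeal (I := P)]
      obtain ⟨T, hT⟩ : Q0.FG := IsNoetherian.noetherian Q0
      have hzall : ∀ q : {y // y ∈ T}, ∃ zb : B, f ((q : A) * a) = f s * zb := by
        rintro ⟨q, hq⟩
        have hqQ0 : q ∈ Q0 := by rw [← hT]; exact Ideal.subset_span hq
        obtain ⟨zb, hzb⟩ := (ha q).mp hqQ0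
        exact ⟨zb, by rw [map_mul, hzb]⟩
      choose z hz using hzall
      obtain ⟨w, hw⟩ := IsLocalization.exist_integer_multiples P.primeCompl T.attach z
      set t₀ : A := a * w with ht₀def
      have hwu : IsUnit (f ↑w) := IsLocalization.map_units B w
      have hQ0eq : Q0 = (Ideal.span {s}).colon (Ideal.span {t₀}) := by
        apply le_antisymm
        · rw [← hT, Ideal.span_le]
          intro q hq
          rw [SetLike.mem_coe, Ideal.mem_colon_span_singleton, Ideal.mem_span_singleton]
          obtain ⟨cc, hcc⟩ := hw ⟨q, hq⟩ (Finset.mem_attach _ _)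
          refine ⟨cc, hinj ?_⟩
          have hzq := hz ⟨q, hq⟩
          have hccB : f ↑w * z ⟨q, hq⟩ = f cc := by
            rw [hcc, Algebra.smul_def]
          calc f (q * t₀) = f (q * a) * f ↑w := by
                rw [ht₀def, ← map_mul]; congr 1; ring
            _ = f s * (f ↑w * z ⟨q, hq⟩) := by rw [hzq]; ring
            _ = f s * f cc := by rw [hccB]
            _ = f (s * cc) := by rw [map_mul]
        · intro y hy
          rw [Ideal.mem_colon_span_singleton, Ideal.mem_span_singleton] at hy
          obtain ⟨d, hd⟩ := hy
          rw [ha y, ← hwu.dvd_mul_right]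
          refine ⟨f d, ?_⟩
          rw [← map_mul, ← map_mul, ← map_mul]
          congr 1
          calc y * a * ↑w = y * (a * ↑w) := by ring
            _ = y * t₀ := by rw [ht₀def]
            _ = s * d := hd
      have hkey := aux_key hS0 hIC hsS (hQ0eq ▸ hQ0p)
      rw [← hQ0eq] at hkey
      have hsQ0 : s ∈ Q0 := (ha s).mpr ⟨f a, rfl⟩
      have hQ0min : Q0 ∈ (Ideal.span {s}).minimalPrimes := by
        constructor
        · exact ⟨hQ0p, Ideal.span_le.mpr (Set.singleton_subset_iff.mpr hsQ0)⟩
        · intro J hJ hJle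
          by_contra hn
          have hJlt : J < Q0 := lt_of_le_not_ge hJle hn
          have hJbot : J = ⊥ := hkey J hJ.1 hJlt
          exact hs0 (by simpa [hJbot] using hJ.2 (Ideal.subset_span rfl : s ∈ Ideal.span {s}))
      have hQ0neP : Q0 ≠ P := by
        intro h
        exact hr1ne (hkey r1 hr1prime (by rw [h]; exact hr1P))
      exact ⟨hQ0min, lt_of_le_of_ne hQ0P hQ0neP⟩
    -- prime avoidance
    have hnotsub : ¬ ((P : Set A) ⊆ ⋃ Q ∈ (hFfin.toFinset : Set (Ideal A)), (Q : Set A)) := by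
      intro hsub
      have hp : ∀ Q ∈ hFfin.toFinset, Q ≠ P → Q ≠ P → (id Q : Ideal A).IsPrime := by
        intro Q hQ _ _
        exact (hFfin.mem_toFinset.mp hQ).1.1.1
      obtain ⟨Q, hQF, hPQ⟩ := (Ideal.subset_union_prime P P hp).mp hsub
      have hQF' : Q ∈ F := hFfin.mem_toFinset.mp hQF
      exact absurd hPQ (not_le_of_gt hQF'.2)
    obtain ⟨x, hxP, hxU⟩ := Set.not_subset.mp hnotsub
    have hxF : ∀ Q ∈ F, x ∉ Q := by
      intro Q hQ hxQ
      exact hxU (Set.mem_biUnion (by rwa [Finset.mem_coe, hFfin.mem_toFinset]) hxQ)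
    have hxreg : IsSMulRegular (QuotSMulTop (f s) B) (f x) := by
      by_contra hnreg
      have hmem2 : f x ∈ ⋃ p ∈ associatedPrimes B (QuotSMulTop (f s) B), (p : Set B) := by
        rw [biUnion_associatedPrimes_eq_compl_regular]
        exact hnreg
      obtain ⟨Q, hQass, hxQ⟩ := Set.mem_iUnion₂.mp hmem2
      exact hxF _ (hAss Q hQass) (Ideal.mem_comap.mpr hxQ)
    refine le_trans (min_le_right _ _) ?_
    have hm : ∀ y ∈ [f s, f x], y ∈ IsLocalRing.maximalIdeal B := by
      intro y hy
      rcases List.mem_cons.mp hy with rfl | hy'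
      · exact hmem_max s hsP
      · rcases List.mem_cons.mp hy' with rfl | hy''
        · exact hmem_max x hxP
        · exact absurd hy'' List.not_mem_nil
    have hreg2 : RingTheory.Sequence.IsRegular B [f s, f x] := by
      rw [RingTheory.Sequence.isRegular_iff]
      exact ⟨(isWeaklyRegular_cons_iff _ _ _).mpr ⟨hregs,
        (isWeaklyRegular_cons_iff _ _ _).mpr ⟨hxreg, IsWeaklyRegular.nil _ _⟩⟩, hnt _ hm⟩
    simpa using hdepth [f s, f x] hm hreg2
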